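/- Let P be a poset, let H ⊆ 2^[n] be a fixed family, and let α(H,P) denote the maximum size of a subfamily of H containing no copy of P as a weak subposet. If A ⊆ 2^[n] is a P-free family, then Σ_{A∈A} N_{|A|} / C(n,|A|) ≤ α(H,P), where N_i is the number of sets in H of cardinality i. -/

import Mathlib

open Finset

/-- A family `𝒜 ⊆ 2^[n]` contains the poset `P` as a weak subposet. -/
def containsWeak {n : ℕ} (𝒜 : Finset (Finset (Fin n))) (P : Type*) [PartialOrder P] : Prop :=
  ∃ φ : P → Finset (Fin n), Function.Injective φ ∧ (∀ x, φ x ∈ 𝒜) ∧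
    ∀ x y : P, x ≤ y → φ x ⊆ φ y

/-- A permutation sending a finset to any other finset of the same size. -/
lemma exists_perm_image {n : ℕ} (S S' : Finset (Fin n)) (h : S.card = S'.card) :
    ∃ σ : Equiv.Perm (Fin n), S.image σ = S' := by
  classical
  have e : {x // x ∈ S} ≃ {x // x ∈ S'} := Finset.equivOfCardEq h
  refine ⟨e.extendSubtype, ?_⟩
  apply Finset.eq_of_subset_of_card_le
  · intro y hy
    simp only [Finset.mem_image] at hy
    obtain ⟨x, hx, rfl⟩ := hy
    exact e.extendSubtype_mem x hx
  · rw [Finset.card_image_of_injective _ e.extendSubtype.injective, h]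

/-- The number of permutations mapping `A` onto `S` does not depend on `S` (for fixed size). -/
lemma count_uniform {n : ℕ} (A S S' : Finset (Fin n)) (h : S.card = S'.card) :
    (univ.filter fun π : Equiv.Perm (Fin n) => A.image ⇑π = S).card
      = (univ.filter fun π : Equiv.Perm (Fin n) => A.image ⇑π = S').card := by
  classical
  obtain ⟨σ, hσ⟩ := exists_perm_image S S' h
  have himg : (univ.filter fun π : Equiv.Perm (Fin n) => A.image ⇑π = S).image
      (fun π => σ * π) = univ.filter fun π : Equiv.Perm (Fin n) => A.image ⇑π = S' := by
    ext τ
    simp only [Finset.mem_image, mem_filter, mem_univ, true_and]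
    constructor
    · rintro ⟨π, hπ, rfl⟩
      rw [Equiv.Perm.coe_mul, ← Finset.image_image, hπ, hσ]
    · intro hτ
      refine ⟨σ⁻¹ * τ, ?_, by group⟩
      rw [Equiv.Perm.coe_mul, ← Finset.image_image, hτ, ← hσ, Finset.image_image,
        show ⇑σ⁻¹ ∘ ⇑σ = id from funext fun x => σ.symm_apply_apply x, Finset.image_id]
  rw [← himg, Finset.card_image_of_injective _ (mul_right_injective σ)]

lemma count_mul_choose {n : ℕ} (A S : Finset (Fin n)) (hS : S.card = A.card) :
    (univ.filter fun π : Equiv.Perm (Fin n) => A.image ⇑π = S).card * n.choose A.card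
      = n.factorial := by
  classical
  have hfib : (univ : Finset (Equiv.Perm (Fin n))).card
      = ∑ S' ∈ (univ : Finset (Fin n)).powersetCard A.card,
        (univ.filter fun π : Equiv.Perm (Fin n) => A.image ⇑π = S').card := by
    apply Finset.card_eq_sum_card_fiberwise
    intro π _
    rw [Finset.mem_coe, Finset.mem_powersetCard]
    exact ⟨Finset.subset_univ _, Finset.card_image_of_injective _ π.injective⟩
  have hconst : ∀ S' ∈ (univ : Finset (Fin n)).powersetCard A.card,
      (univ.filter fun π : Equiv.Perm (Fin n) => A.image ⇑π = S').card
        = (univ.filter fun π : Equiv.Perm (Fin n) => A.image ⇑π = S).card := by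
    intro S' hS'
    rw [Finset.mem_powersetCard] at hS'
    exact count_uniform A S' S (by rw [hS'.2, hS])
  rw [Finset.sum_congr rfl hconst, Finset.sum_const, smul_eq_mul,
    Finset.card_powersetCard] at hfib
  simp only [Finset.card_univ, Fintype.card_perm, Fintype.card_fin] at hfib
  rw [mul_comm]
  exact hfib.symm

lemma count_in_H {n : ℕ} (H : Finset (Finset (Fin n))) (A : Finset (Fin n)) :
    (univ.filter fun π : Equiv.Perm (Fin n) => A.image ⇑π ∈ H).card * n.choose A.card
      = (H.filter fun S => S.card = A.card).card * n.factorial := by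
  classical
  have hfib : (univ.filter fun π : Equiv.Perm (Fin n) => A.image ⇑π ∈ H).card
      = ∑ S ∈ H.filter (fun S => S.card = A.card),
        ((univ.filter fun π : Equiv.Perm (Fin n) => A.image ⇑π ∈ H).filter
          (fun π : Equiv.Perm (Fin n) => A.image ⇑π = S)).card := by
    apply Finset.card_eq_sum_card_fiberwise
      (f := fun π : Equiv.Perm (Fin n) => A.image ⇑π)
    intro π hπ
    rw [Finset.mem_coe] at hπ ⊢
    simp only [mem_filter, mem_univ, true_and] at hπ
    exact Finset.mem_filter.2 ⟨hπ, Finset.card_image_of_injective _ π.injective⟩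
  have heq : ∀ S ∈ H.filter (fun S => S.card = A.card),
      ((univ.filter fun π : Equiv.Perm (Fin n) => A.image ⇑π ∈ H).filter
          (fun π : Equiv.Perm (Fin n) => A.image ⇑π = S)).card
        = (univ.filter fun π : Equiv.Perm (Fin n) => A.image ⇑π = S).card := by
    intro S hS
    rw [Finset.mem_filter] at hS
    congr 1
    rw [Finset.filter_filter]
    apply Finset.filter_congr
    intro π _
    constructor
    · exact fun h => h.2
    · exact fun h => ⟨h ▸ hS.1, h⟩
  rw [hfib, Finset.sum_congr rfl heq, Finset.sum_mul]
  rw [Finset.sum_congr rfl (fun S hS => count_mul_choose A S (Finset.mem_filter.1 hS).2),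
    Finset.sum_const, smul_eq_mul]

theorem lubell_type_bound (n : ℕ) (P : Type*) [PartialOrder P] [Fintype P]
    (H : Finset (Finset (Fin n))) (α : ℕ)
    (hα : ∀ 𝒮 ⊆ H, ¬ containsWeak 𝒮 P → 𝒮.card ≤ α)
    (𝒜 : Finset (Finset (Fin n))) (h𝒜 : ¬ containsWeak 𝒜 P) :
    ∑ A ∈ 𝒜, ((H.filter (fun S => S.card = A.card)).card : ℝ) / (n.choose A.card) ≤ α := by
  classical
  -- for each permutation π, the family π(𝒜) ∩ H is a P-free subfamily of H
  have key : ∀ π : Equiv.Perm (Fin n),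
      (𝒜.filter fun A => A.image ⇑π ∈ H).card ≤ α := by
    intro π
    set 𝒮 := (𝒜.filter fun A => A.image ⇑π ∈ H).image (Finset.image ⇑π) with h𝒮
    have hsub : 𝒮 ⊆ H := by
      intro S hS
      simp only [h𝒮, Finset.mem_image, Finset.mem_filter] at hS
      obtain ⟨A, ⟨_, hA⟩, rfl⟩ := hS
      exact hA
    have hfree : ¬ containsWeak 𝒮 P := by
      rintro ⟨φ, hinj, hmem, hmono⟩
      apply h𝒜
      refine ⟨fun x => (φ x).image ⇑π.symm, ?_, ?_, ?_⟩
      · intro x y hxy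
        apply hinj
        have := congrArg (Finset.image (⇑π)) hxy
        rwa [Finset.image_image, Finset.image_image, Equiv.self_comp_symm,
          Finset.image_id, Finset.image_id] at this
      · intro x
        show (φ x).image ⇑π.symm ∈ 𝒜
        have := hmem x
        simp only [h𝒮, Finset.mem_image, Finset.mem_filter] at this
        obtain ⟨A, ⟨hA, _⟩, hAeq⟩ := this
        rwa [← hAeq, Finset.image_image, Equiv.symm_comp_self, Finset.image_id]
      · intro x y hxy
        exact Finset.image_subset_image (hmono x y hxy)
    have := hα 𝒮 hsub hfree
    rwa [h𝒮, Finset.card_image_of_injective _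
      (Finset.image_injective π.injective)] at this
  -- sum the bound over all permutations
  have hsum : ∑ A ∈ 𝒜,
      (univ.filter fun π : Equiv.Perm (Fin n) => A.image ⇑π ∈ H).card
        ≤ n.factorial * α := by
    calc ∑ A ∈ 𝒜, (univ.filter fun π : Equiv.Perm (Fin n) => A.image ⇑π ∈ H).card
        = ∑ A ∈ 𝒜, ∑ π : Equiv.Perm (Fin n), if A.image ⇑π ∈ H then 1 else 0 := by
          refine Finset.sum_congr rfl fun A _ => ?_
          rw [Finset.card_filter]
      _ = ∑ π : Equiv.Perm (Fin n), ∑ A ∈ 𝒜, if A.image ⇑π ∈ H then 1 else 0 :=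
          Finset.sum_comm
      _ = ∑ π : Equiv.Perm (Fin n), (𝒜.filter fun A => A.image ⇑π ∈ H).card := by
          refine Finset.sum_congr rfl fun π _ => ?_
          rw [Finset.card_filter]
      _ ≤ ∑ _π : Equiv.Perm (Fin n), α := Finset.sum_le_sum fun π _ => key π
      _ = n.factorial * α := by
          rw [Finset.sum_const, smul_eq_mul, Finset.card_univ, Fintype.card_perm,
            Fintype.card_fin]
  -- convert to the real inequality
  have hfact : (0 : ℝ) < n.factorial := by positivity
  have hterm : ∀ A ∈ 𝒜, ((H.filter fun S => S.card = A.card).card : ℝ) / (n.choose A.card)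
      = ((univ.filter fun π : Equiv.Perm (Fin n) => A.image ⇑π ∈ H).card : ℝ)
          / n.factorial := by
    intro A _
    have hAn : A.card ≤ n := by
      simpa using Finset.card_le_card (Finset.subset_univ A)
    have hchoose : (0 : ℝ) < n.choose A.card := by
      exact_mod_cast Nat.choose_pos hAn
    rw [div_eq_div_iff hchoose.ne' hfact.ne']
    exact_mod_cast (count_in_H H A).symm
  rw [Finset.sum_congr rfl hterm, ← Finset.sum_div]
  rw [div_le_iff₀ hfact]
  calc (∑ A ∈ 𝒜, ((univ.filter fun π : Equiv.Perm (Fin n) => A.image ⇑π ∈ H).card : ℝ))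
      = ((∑ A ∈ 𝒜, (univ.filter fun π : Equiv.Perm (Fin n) => A.image ⇑π ∈ H).card : ℕ) : ℝ) := by
        push_cast; ring
    _ ≤ ((n.factorial * α : ℕ) : ℝ) := by exact_mod_cast hsum
    _ = α * n.factorial := by push_cast; ring
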